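/- Let K be a symmetric n×n real matrix with an orthonormal eigenbasis v₁, …, vₙ and eigenvalues λ₁ ≥ … ≥ λₙ > 0, let 1 ≤ k ≤ n, let g : ℝ → ℝ satisfy g(λᵢ) > 0 for 1 ≤ i ≤ k, and let S = I − Σ_{i=1}^{k}(1 − g(λᵢ)/λᵢ) vᵢ vᵢᵀ. Then (KS) vᵢ = g(λᵢ) vᵢ for every 1 ≤ i ≤ k and (KS) vⱼ = λⱼ vⱼ for every k < j ≤ n; moreover KS is symmetric, and its eigenvalues are g(λ₁), …, g(λ_k), λ_{k+1}, …, λₙ. -/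

import Mathlib

open Matrix

lemma msk_sum_mulVec {n : ℕ} {ι : Type*} (s : Finset ι)
    (A : ι → Matrix (Fin n) (Fin n) ℝ) (x : Fin n → ℝ) :
    (∑ i ∈ s, A i).mulVec x = ∑ i ∈ s, (A i).mulVec x := by
  funext m
  simp only [Matrix.mulVec, dotProduct, Matrix.sum_apply, Finset.sum_apply, Finset.sum_mul]
  rw [Finset.sum_comm]

lemma msk_vecMulVec_mulVec {n : ℕ} (a b x : Fin n → ℝ) :
    (vecMulVec a b).mulVec x = (b ⬝ᵥ x) • a := by
  funext m
  simp [Matrix.mulVec, dotProduct, vecMulVec_apply, Finset.mul_sum,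
    mul_assoc, mul_comm, mul_left_comm]

/-- With `S = I − Σ_{i<k}(1 − g(λᵢ)/λᵢ) vᵢ vᵢᵀ` built from the
orthonormal eigenbasis of `K`, the product `KS` satisfies `(KS) vᵢ = g(λᵢ) vᵢ`
for the top `k` indices and `(KS) vⱼ = λⱼ vⱼ` for the remaining ones; moreover
`KS` is symmetric (so its eigenvalues are `g(λ₁), …, g(λ_k), λ_{k+1}, …, λₙ`). -/
theorem msk_modified_kernel_eigenpairs
    {n : ℕ} (K : Matrix (Fin n) (Fin n) ℝ) (hKsymm : K.IsSymm)
    (v : Fin n → (Fin n → ℝ)) (lam : Fin n → ℝ)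
    (horth : ∀ i j : Fin n, v i ⬝ᵥ v j = if i = j then 1 else 0)
    (heig : ∀ i : Fin n, K.mulVec (v i) = lam i • v i)
    (hdesc : ∀ i j : Fin n, i ≤ j → lam j ≤ lam i)
    (hpos : ∀ i : Fin n, 0 < lam i)
    (k : ℕ) (hk1 : 1 ≤ k) (hkn : k ≤ n)
    (g : ℝ → ℝ) (hg : ∀ i : Fin n, (i : ℕ) < k → 0 < g (lam i))
    (S : Matrix (Fin n) (Fin n) ℝ)
    (hS : S = 1 - ∑ i ∈ Finset.univ.filter (fun i : Fin n => (i : ℕ) < k),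
        (1 - g (lam i) / lam i) • vecMulVec (v i) (v i)) :
    (∀ i : Fin n, (i : ℕ) < k → (K * S).mulVec (v i) = g (lam i) • v i) ∧
      (∀ j : Fin n, k ≤ (j : ℕ) → (K * S).mulVec (v j) = lam j • v j) ∧
      (K * S).IsSymm := by
  -- action of S on each eigenvector
  have hSv : ∀ j : Fin n, S.mulVec (v j) =
      v j - (if (j : ℕ) < k then (1 - g (lam j) / lam j) else 0) • v j := by
    intro j
    rw [hS, Matrix.sub_mulVec, Matrix.one_mulVec, msk_sum_mulVec]
    congr 1
    have : ∀ i ∈ Finset.univ.filter (fun i : Fin n => (i : ℕ) < k),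
        ((1 - g (lam i) / lam i) • vecMulVec (v i) (v i)).mulVec (v j)
          = if i = j then (1 - g (lam j) / lam j) • v j else 0 := by
      intro i hi
      rw [Matrix.smul_mulVec, msk_vecMulVec_mulVec, horth]
      by_cases h : i = j
      · subst h; simp
      · simp [h]
    rw [Finset.sum_congr rfl this, Finset.sum_ite_eq' _ j]
    simp [Finset.mem_filter]
  have hKSv : ∀ j : Fin n, (K * S).mulVec (v j) =
      (if (j : ℕ) < k then g (lam j) else lam j) • v j := by
    intro j
    rw [← Matrix.mulVec_mulVec, hSv j]
    by_cases h : (j : ℕ) < k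
    · simp only [h, if_pos]
      have hne : lam j ≠ 0 := (hpos j).ne'
      rw [Matrix.mulVec_sub, Matrix.mulVec_smul, heig, smul_smul]
      rw [← sub_smul]
      congr 1
      field_simp
      ring
    · simp only [h, if_neg, not_false_iff]
      rw [zero_smul, sub_zero, heig]
  refine ⟨fun i hi => by rw [hKSv i, if_pos hi],
    fun j hj => by rw [hKSv j, if_neg (not_lt.mpr hj)], ?_⟩
  -- symmetry: K * S = K - ∑ cᵢλᵢ vᵢvᵢᵀ
  have hKouter : ∀ i : Fin n, K * vecMulVec (v i) (v i) = lam i • vecMulVec (v i) (v i) := by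
    intro i
    funext a b
    have := congrFun (heig i) a
    simp only [Matrix.mul_apply, vecMulVec_apply, Matrix.smul_apply, smul_eq_mul]
    calc ∑ j, K a j * (v i j * v i b) = (∑ j, K a j * v i j) * v i b := by
          rw [Finset.sum_mul]; exact Finset.sum_congr rfl fun j _ => by ring
      _ = lam i * (v i a * v i b) := by
          have : (∑ j, K a j * v i j) = lam i * v i a := by
            simpa [Matrix.mulVec, dotProduct] using congrFun (heig i) a
          rw [this]; ring
  have hKS : K * S = K - ∑ i ∈ Finset.univ.filter (fun i : Fin n => (i : ℕ) < k),
      ((1 - g (lam i) / lam i) * lam i) • vecMulVec (v i) (v i) := by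
    rw [hS, Matrix.mul_sub, Matrix.mul_one, Finset.mul_sum]
    congr 1
    refine Finset.sum_congr rfl fun i _ => ?_
    rw [Matrix.mul_smul, hKouter i, smul_smul, mul_comm]
  rw [hKS, Matrix.IsSymm, Matrix.transpose_sub, Matrix.transpose_sum]
  rw [hKsymm]
  congr 1
  refine Finset.sum_congr rfl fun i _ => ?_
  rw [Matrix.transpose_smul]
  congr 1
  funext a b
  simp [vecMulVec_apply, mul_comm]
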